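/- arXiv:1311.3323 — 2 statements merged into one kernel-verified Lean document; each statement's English description precedes it below -/
import Mathlib

section
/- Let 0 < φ < π/4 and let Γ be an interior segment barrier for the unit square U = [0,1]² (a segment barrier whose union is contained in U). Let X be the subfamily of segments making angle at most φ with the x-axis (|(b − a)₂| ≤ sin φ · ‖b − a‖), Y the subfamily of segments making angle at most φ with the y-axis (|(b − a)₁| ≤ sin φ · ‖b − a‖), and Z the remaining segments, with |X|, |Y|, |Z| the corresponding sums of segment lengths. Then (|X| + |Y|) · √2 · cos(π/4 − φ) + |Z| · √2 ≥ 2. -/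
open MeasureTheory Set

noncomputable section

/-- A point in the plane. -/
abbrev Pt : Type := EuclideanSpace ℝ (Fin 2)

/-- A line in ℝ² is a set {p + t • v : t ∈ ℝ} for some p, v with v ≠ 0. -/
def IsLine (l : Set Pt) : Prop :=
  ∃ p v : Pt, v ≠ 0 ∧ l = {q : Pt | ∃ t : ℝ, q = p + t • v}

/-- Γ is a barrier (opaque set) for C if every line meeting C also meets Γ. -/
def IsBarrier (Γ C : Set Pt) : Prop :=
  ∀ l : Set Pt, IsLine l → (l ∩ C).Nonempty → (l ∩ Γ).Nonempty

/-- The closed unit square U = [0,1] × [0,1]. -/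
def unitSquare : Set Pt := {p : Pt | p 0 ∈ Icc (0:ℝ) 1 ∧ p 1 ∈ Icc (0:ℝ) 1}

/-- A segment [a, b] makes angle at most φ with the x-axis: |(b − a)₂| ≤ sin φ · ‖b − a‖. -/
def NearHorizontal (φ : ℝ) (a b : Pt) : Prop := |(b - a) 1| ≤ Real.sin φ * ‖b - a‖

/-- A segment [a, b] makes angle at most φ with the y-axis: |(b − a)₁| ≤ sin φ · ‖b − a‖. -/
def NearVertical (φ : ℝ) (a b : Pt) : Prop := |(b - a) 0| ≤ Real.sin φ * ‖b - a‖

theorem key1 (s c ℓ d0 d1 : ℝ) (hsc : s ≤ c) (h1 : s^2 + c^2 = 1)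
    (hd : d0^2 + d1^2 = ℓ^2) (hℓ : 0 ≤ ℓ) (hne : |d1| ≤ s*ℓ) : |d0+d1| ≤ (s+c)*ℓ := by
  have h2 := abs_add_le d0 d1
  have h4 : |d1| ≤ c*ℓ := hne.trans (mul_le_mul_of_nonneg_right hsc hℓ)
  have h3 : |d0| ≤ c*ℓ + (s*ℓ - |d1|) := by
    nlinarith [sq_abs d0, sq_abs d1, abs_nonneg d0, abs_nonneg d1,
      mul_nonneg (sub_nonneg.2 hne) (sub_nonneg.2 h4)]
  linarith

theorem key2 (ℓ d0 d1 : ℝ) (hd : d0^2 + d1^2 = ℓ^2) (hℓ : 0 ≤ ℓ) : |d0+d1| ≤ Real.sqrt 2 * ℓ := by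
  have h : (d0+d1)^2 ≤ (Real.sqrt 2 * ℓ)^2 := by
    rw [mul_pow, Real.sq_sqrt (by norm_num : (0:ℝ) ≤ 2)]
    nlinarith [sq_nonneg (d0 - d1)]
  have := Real.sqrt_le_sqrt h
  rwa [Real.sqrt_sq_eq_abs, Real.sqrt_sq_eq_abs,
    abs_of_nonneg (mul_nonneg (Real.sqrt_nonneg 2) hℓ)] at this

theorem norm_pt (d : Pt) : (d 0)^2 + (d 1)^2 = ‖d‖^2 := by
  rw [EuclideanSpace.norm_eq, Fin.sum_univ_two, Real.sq_sqrt (by positivity)]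
  simp [sq_abs]


/-- for an interior segment barrier of the unit square, partitioned into
near horizontal segments X, near vertical segments Y and remaining segments Z
(with respect to an angle 0 < φ < π/4), one has
(|X| + |Y|)·√2·cos(π/4 − φ) + |Z|·√2 ≥ 2. -/
theorem interior_barrier_xy_projection_inequality
    (φ : ℝ) (hφ0 : 0 < φ) (hφ1 : φ < Real.pi / 4)
    (a b : ℕ → Pt) (hab : ∀ i, a i ≠ b i)
    (hbar : IsBarrier (⋃ i, segment ℝ (a i) (b i)) unitSquare)
    (hint : (⋃ i, segment ℝ (a i) (b i)) ⊆ unitSquare)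
    (hsum : Summable fun i => ‖b i - a i‖) :
    2 ≤ ((∑' i : {j : ℕ // NearHorizontal φ (a j) (b j)}, ‖b i.1 - a i.1‖) +
          ∑' i : {j : ℕ // NearVertical φ (a j) (b j)}, ‖b i.1 - a i.1‖) *
            (Real.sqrt 2 * Real.cos (Real.pi / 4 - φ)) +
        (∑' i : {j : ℕ // ¬ NearHorizontal φ (a j) (b j) ∧ ¬ NearVertical φ (a j) (b j)},
          ‖b i.1 - a i.1‖) * Real.sqrt 2 := by
  classical
  have hπ := Real.pi_pos
  -- trig facts
  have hs0 : 0 < Real.sin φ := Real.sin_pos_of_pos_of_lt_pi hφ0 (by linarith)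
  have hc0 : 0 < Real.cos φ := Real.cos_pos_of_mem_Ioo ⟨by linarith, by linarith⟩
  have hsc : Real.sin φ ≤ Real.cos φ := by
    rw [← Real.sin_pi_div_two_sub]
    exact (Real.strictMonoOn_sin ⟨by linarith, by linarith⟩
      ⟨by linarith, by linarith⟩ (by linarith)).le
  have hs1 : Real.sin φ ^ 2 + Real.cos φ ^ 2 = 1 := Real.sin_sq_add_cos_sq φ
  have hkey : Real.sqrt 2 * Real.cos (Real.pi / 4 - φ) = Real.sin φ + Real.cos φ := by
    rw [Real.cos_sub, Real.cos_pi_div_four, Real.sin_pi_div_four]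
    have h2 : Real.sqrt 2 * Real.sqrt 2 = 2 := Real.mul_self_sqrt (by norm_num)
    ring_nf
    nlinarith [h2]
  set ℓ : ℕ → ℝ := fun i => ‖b i - a i‖ with hℓdef
  have hℓpos : ∀ i, 0 < ℓ i := fun i => by
    simp only [hℓdef, norm_pos_iff, sub_ne_zero]; exact (hab i).symm
  set h : ℕ → ℝ := fun i => |(b i - a i) 0 + (b i - a i) 1| with hhdef
  set c : ℕ → ℝ := fun i =>
    if NearHorizontal φ (a i) (b i) ∨ NearVertical φ (a i) (b i)
    then (Real.sin φ + Real.cos φ) * ℓ i else Real.sqrt 2 * ℓ i with hcdef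
  have hd2 : ∀ i, ((b i - a i) 0)^2 + ((b i - a i) 1)^2 = ℓ i ^ 2 := fun i => norm_pt _
  -- pointwise bounds
  have hbound : ∀ i, h i ≤ c i := by
    intro i
    simp only [hhdef, hcdef]
    split_ifs with hi
    · rcases hi with hi | hi
      · exact key1 _ _ _ _ _ hsc hs1 (hd2 i) (hℓpos i).le hi
      · rw [add_comm]
        exact key1 _ _ _ _ _ hsc hs1 (by rw [← hd2 i]; ring) (hℓpos i).le hi
    · exact key2 _ _ _ (hd2 i) (hℓpos i).le
  have hsqrt2 : (1:ℝ) ≤ Real.sqrt 2 := by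
    rw [show (1:ℝ) = Real.sqrt 1 by simp]
    exact Real.sqrt_le_sqrt (by norm_num)
  have hcs2 : Real.sin φ + Real.cos φ ≤ Real.sqrt 2 := by
    rw [← hkey]
    nlinarith [Real.cos_le_one (Real.pi / 4 - φ), Real.sqrt_nonneg 2]
  have hcle : ∀ i, c i ≤ Real.sqrt 2 * ℓ i := by
    intro i; simp only [hcdef]; split_ifs
    · exact mul_le_mul_of_nonneg_right hcs2 (hℓpos i).le
    · exact le_rfl

  -- cover
  have hcover : Icc (0:ℝ) 2 ⊆ ⋃ i, uIcc ((a i) 0 + (a i) 1) ((b i) 0 + (b i) 1) := by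
    intro x hx
    set p : Pt := (EuclideanSpace.equiv (Fin 2) ℝ).symm ![x/2, x/2] with hp
    set v : Pt := (EuclideanSpace.equiv (Fin 2) ℝ).symm ![1, -1] with hv
    have hp0 : p 0 = x/2 := rfl
    have hp1 : p 1 = x/2 := rfl
    have hv0 : v 0 = 1 := rfl
    have hv1 : v 1 = -1 := rfl
    have hvne : v ≠ 0 := by
      intro hz
      have : v 0 = 0 := by rw [hz]; rfl
      rw [hv0] at this; norm_num at this
    have hmem : p ∈ unitSquare := by
      constructor <;> simp only [hp0, hp1] <;>
        exact ⟨by linarith [hx.1], by linarith [hx.2]⟩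
    obtain ⟨q, ⟨t, rfl⟩, hqΓ⟩ :=
      hbar _ ⟨p, v, hvne, rfl⟩ ⟨p, ⟨0, by simp⟩, hmem⟩
    have hq : (p + t • v) 0 + (p + t • v) 1 = x := by
      simp only [PiLp.add_apply, PiLp.smul_apply, smul_eq_mul, hp0, hp1, hv0, hv1]
      ring
    obtain ⟨i, hi⟩ := mem_iUnion.1 hqΓ
    obtain ⟨u, w, hu, hw, huw, hq2⟩ := hi
    refine mem_iUnion.2 ⟨i, ?_⟩
    rw [← segment_eq_uIcc]
    refine ⟨u, w, hu, hw, huw, ?_⟩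
    rw [← hq, ← hq2]
    simp only [PiLp.add_apply, PiLp.smul_apply, smul_eq_mul]
    ring
  have hnn : ∀ i, 0 ≤ h i := fun i => abs_nonneg _
  have hsumh : Summable h :=
    Summable.of_nonneg_of_le hnn (fun i => (hbound i).trans (hcle i)) (hsum.mul_left _)
  have hmeas : (ENNReal.ofReal 2) ≤ ∑' i, ENNReal.ofReal (h i) := by
    calc ENNReal.ofReal 2 = volume (Icc (0:ℝ) 2) := by rw [Real.volume_Icc]; norm_num
    _ ≤ volume (⋃ i, uIcc ((a i) 0 + (a i) 1) ((b i) 0 + (b i) 1)) := measure_mono hcover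
    _ ≤ ∑' i, volume (uIcc ((a i) 0 + (a i) 1) ((b i) 0 + (b i) 1)) := measure_iUnion_le _
    _ = ∑' i, ENNReal.ofReal (h i) := by
        congr 1; funext i
        rw [Real.volume_interval]
        congr 1
        simp only [hhdef, PiLp.sub_apply]
        ring
  have h2le : (2:ℝ) ≤ ∑' i, h i := by
    rw [← ENNReal.ofReal_tsum_of_nonneg hnn hsumh] at hmeas
    exact (ENNReal.ofReal_le_ofReal_iff (tsum_nonneg hnn)).1 hmeas
  have hsumc : Summable c :=
    Summable.of_nonneg_of_le (fun i => (hnn i).trans (hbound i)) hcle (hsum.mul_left _)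
  have hhc : ∑' i, h i ≤ ∑' i, c i := hsumh.tsum_le_tsum hbound hsumc
  -- splitting
  have hsin2 : Real.sin φ < Real.sqrt 2 / 2 := by
    have := Real.strictMonoOn_sin (Set.mem_Icc.2 ⟨by linarith, by linarith⟩)
      (Set.mem_Icc.2 ⟨by linarith, by linarith⟩) hφ1
    rwa [Real.sin_pi_div_four] at this
  have hXY : ∀ i, ¬ (NearHorizontal φ (a i) (b i) ∧ NearVertical φ (a i) (b i)) := by
    rintro i ⟨h1, h2⟩
    have hd := hd2 i
    have hx1 : |(b i - a i) 1| ≤ Real.sin φ * ℓ i := h1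
    have hx0 : |(b i - a i) 0| ≤ Real.sin φ * ℓ i := h2
    have hsq : Real.sqrt 2 * Real.sqrt 2 = 2 := Real.mul_self_sqrt (by norm_num)
    have hss : Real.sin φ ^ 2 < 1/2 := by nlinarith [hs0]
    have h0sq : ((b i - a i) 0)^2 ≤ (Real.sin φ * ℓ i)^2 := by
      rw [← sq_abs]
      exact pow_le_pow_left₀ (abs_nonneg _) hx0 2
    have h1sq : ((b i - a i) 1)^2 ≤ (Real.sin φ * ℓ i)^2 := by
      rw [← sq_abs]
      exact pow_le_pow_left₀ (abs_nonneg _) hx1 2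
    nlinarith [hℓpos i, mul_pos (hℓpos i) (hℓpos i)]
  set SX : Set ℕ := {j | NearHorizontal φ (a j) (b j)} with hSX
  set SY : Set ℕ := {j | NearVertical φ (a j) (b j)} with hSY
  set SZ : Set ℕ := {j | ¬ NearHorizontal φ (a j) (b j) ∧ ¬ NearVertical φ (a j) (b j)} with hSZ
  set fXY : ℕ → ℝ := fun i => (Real.sin φ + Real.cos φ) * ℓ i with hfXY
  set fZ : ℕ → ℝ := fun i => Real.sqrt 2 * ℓ i with hfZ
  have hcsplit : ∀ i, c i = SX.indicator fXY i + SY.indicator fXY i + SZ.indicator fZ i := by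
    intro i
    by_cases hX : NearHorizontal φ (a i) (b i) <;> by_cases hY : NearVertical φ (a i) (b i)
    · exact absurd ⟨hX, hY⟩ (hXY i)
    · simp [hcdef, hSX, hSY, hSZ, indicator, hX, hY, hfXY, hfZ]
    · simp [hcdef, hSX, hSY, hSZ, indicator, hX, hY, hfXY, hfZ]
    · simp [hcdef, hSX, hSY, hSZ, indicator, hX, hY, hfXY, hfZ]
  have hsXY : Summable fXY := hsum.mul_left _
  have hsZ : Summable fZ := hsum.mul_left _
  have hceq : ∑' i, c i =
      (Real.sin φ + Real.cos φ) * (∑' i : SX, ℓ i) +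
      (Real.sin φ + Real.cos φ) * (∑' i : SY, ℓ i) +
      Real.sqrt 2 * (∑' i : SZ, ℓ i) := by
    calc ∑' i, c i
        = ∑' i, (SX.indicator fXY i + SY.indicator fXY i + SZ.indicator fZ i) := by
          exact tsum_congr hcsplit
      _ = (∑' i, SX.indicator fXY i) + (∑' i, SY.indicator fXY i) + ∑' i, SZ.indicator fZ i := by
          rw [Summable.tsum_add ((hsXY.indicator SX).add (hsXY.indicator SY)) (hsZ.indicator SZ),
            Summable.tsum_add (hsXY.indicator SX) (hsXY.indicator SY)]
      _ = (∑' i : SX, fXY i) + (∑' i : SY, fXY i) + ∑' i : SZ, fZ i := by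
          rw [tsum_subtype SX fXY, tsum_subtype SY fXY, tsum_subtype SZ fZ]
      _ = _ := by
          simp only [hfXY, hfZ]
          rw [tsum_mul_left, tsum_mul_left, tsum_mul_left]
  rw [hkey]
  have hfin : (2:ℝ) ≤
      (Real.sin φ + Real.cos φ) * (∑' i : SX, ℓ i) +
      (Real.sin φ + Real.cos φ) * (∑' i : SY, ℓ i) +
      Real.sqrt 2 * (∑' i : SZ, ℓ i) := by
    rw [← hceq]; linarith
  have e1 : (∑' i : {j : ℕ // NearHorizontal φ (a j) (b j)}, ‖b i.1 - a i.1‖) = ∑' i : SX, ℓ i := rfl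
  have e2 : (∑' i : {j : ℕ // NearVertical φ (a j) (b j)}, ‖b i.1 - a i.1‖) = ∑' i : SY, ℓ i := rfl
  have e3 : (∑' i : {j : ℕ // ¬ NearHorizontal φ (a j) (b j) ∧ ¬ NearVertical φ (a j) (b j)},
      ‖b i.1 - a i.1‖) = ∑' i : SZ, ℓ i := rfl
  rw [e1, e2, e3]
  linarith
end
end

section
/- Let 0 < φ < π/4 and let Γ be an interior segment barrier for the unit square U = [0,1]² (a segment barrier whose union is contained in U). Let X be the subfamily of segments making angle at most φ with the x-axis (|(b − a)₂| ≤ sin φ · ‖b − a‖), Y the subfamily of segments making angle at most φ with the y-axis (|(b − a)₁| ≤ sin φ · ‖b − a‖), and Z the remaining segments, with |X|, |Y|, |Z| the corresponding sums of segment lengths. Then (|X| + |Y|) · √2 + |Z| · √2 · cos φ ≥ 2√2. -/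
open MeasureTheory Set

noncomputable section

lemma norm_sq_coords (x : Pt) : ‖x‖^2 = (x 0)^2 + (x 1)^2 := by
  rw [EuclideanSpace.norm_eq, Real.sq_sqrt (by positivity)]
  simp [Fin.sum_univ_two, sq_abs]

lemma abs_coord_le_norm (x : Pt) (j : Fin 2) : |x j| ≤ ‖x‖ := by
  have h := norm_sq_coords x
  have hn : (0:ℝ) ≤ ‖x‖ := norm_nonneg _
  have : (x j)^2 ≤ ‖x‖^2 := by
    have h0 := sq_nonneg (x 0)
    have h1 := sq_nonneg (x 1)
    match j with
    | 0 => linarith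
    | 1 => linarith
  nlinarith [abs_nonneg (x j), sq_abs (x j)]

/-- Measure-theoretic covering lemma on ℝ. -/
lemma length_le_tsum_of_cover (r s : ℝ) (x y : ℕ → ℝ)
    (hcov : Icc r s ⊆ ⋃ i, uIcc (x i) (y i))
    (hs : Summable fun i => |y i - x i|) : s - r ≤ ∑' i, |y i - x i| := by
  have h1 : (ENNReal.ofReal (s - r)) ≤ ∑' i, ENNReal.ofReal |y i - x i| := by
    calc ENNReal.ofReal (s - r) = volume (Icc r s) := (Real.volume_Icc).symm
    _ ≤ volume (⋃ i, uIcc (x i) (y i)) := measure_mono hcov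
    _ ≤ ∑' i, volume (uIcc (x i) (y i)) := measure_iUnion_le _
    _ = ∑' i, ENNReal.ofReal |y i - x i| := by simp [Real.volume_interval]
  rw [← ENNReal.ofReal_tsum_of_nonneg (fun i => abs_nonneg _) hs] at h1
  exact (ENNReal.ofReal_le_ofReal_iff (tsum_nonneg fun i => abs_nonneg _)).mp h1

/-- A convex combination of reals lies in the uIcc. -/
lemma comb_mem_uIcc {u v p q : ℝ} (hu : 0 ≤ u) (hv : 0 ≤ v) (huv : u + v = 1) :
    u * p + v * q ∈ uIcc p q := by
  rw [← segment_eq_uIcc]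
  exact ⟨u, v, hu, hv, huv, rfl⟩

set_option maxHeartbeats 2000000 in
/-- for an interior segment barrier of the unit square, partitioned into
near horizontal segments X, near vertical segments Y and remaining segments Z
(with respect to an angle 0 < φ < π/4), one has
(|X| + |Y|)·√2 + |Z|·√2·cos φ ≥ 2√2. -/
theorem interior_barrier_diagonal_projection_inequality
    (φ : ℝ) (hφ0 : 0 < φ) (hφ1 : φ < Real.pi / 4)
    (a b : ℕ → Pt) (hab : ∀ i, a i ≠ b i)
    (hbar : IsBarrier (⋃ i, segment ℝ (a i) (b i)) unitSquare)
    (hint : (⋃ i, segment ℝ (a i) (b i)) ⊆ unitSquare)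
    (hsum : Summable fun i => ‖b i - a i‖) :
    2 * Real.sqrt 2 ≤ ((∑' i : {j : ℕ // NearHorizontal φ (a j) (b j)}, ‖b i.1 - a i.1‖) +
          ∑' i : {j : ℕ // NearVertical φ (a j) (b j)}, ‖b i.1 - a i.1‖) * Real.sqrt 2 +
        (∑' i : {j : ℕ // ¬ NearHorizontal φ (a j) (b j) ∧ ¬ NearVertical φ (a j) (b j)},
          ‖b i.1 - a i.1‖) * (Real.sqrt 2 * Real.cos φ) := by
  -- notation
  set d : ℕ → Pt := fun i => b i - a i with hd
  have hd0 : ∀ i, (d i) 0 = b i 0 - a i 0 := fun i => rfl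
  have hd1 : ∀ i, (d i) 1 = b i 1 - a i 1 := fun i => rfl
  set ℓ : ℕ → ℝ := fun i => ‖d i‖ with hℓ
  have hℓpos : ∀ i, 0 < ℓ i := fun i => by
    simpa [hℓ, hd, sub_ne_zero] using (hab i).symm
  -- the two projection maps
  set f1 : Pt → ℝ := fun x => x 0 + x 1 with hf1
  set f2 : Pt → ℝ := fun x => x 0 - x 1 with hf2
  -- f applied to segment points lies in uIcc
  have hseg : ∀ (f : Pt → ℝ), (∀ (u v : ℝ) (p q : Pt), f (u • p + v • q) = u * f p + v * f q) →
      ∀ i, ∀ x ∈ segment ℝ (a i) (b i), f x ∈ uIcc (f (a i)) (f (b i)) := by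
    intro f hf i x hx
    obtain ⟨u, v, hu, hv, huv, rfl⟩ := hx
    rw [hf]
    exact comb_mem_uIcc hu hv huv
  have hf1lin : ∀ (u v : ℝ) (p q : Pt), f1 (u • p + v • q) = u * f1 p + v * f1 q := by
    intro u v p q
    simp [hf1, PiLp.add_apply, PiLp.smul_apply, smul_eq_mul]
    ring
  have hf2lin : ∀ (u v : ℝ) (p q : Pt), f2 (u • p + v • q) = u * f2 p + v * f2 q := by
    intro u v p q
    simp [hf2, PiLp.add_apply, PiLp.smul_apply, smul_eq_mul]
    ring
  -- covering by first projection
  have hcov1 : Icc (0:ℝ) 2 ⊆ ⋃ i, uIcc (f1 (a i)) (f1 (b i)) := by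
    intro t ht
    obtain ⟨ht0, ht2⟩ := ht
    set p : Pt := WithLp.toLp 2 (![t/2, t/2] : Fin 2 → ℝ) with hp
    set v : Pt := WithLp.toLp 2 (![1, -1] : Fin 2 → ℝ) with hv
    have hvne : v ≠ 0 := by
      intro h
      have := congrArg (fun w : Pt => w 0) h
      simp [hv] at this
    obtain ⟨x, hxl, hxΓ⟩ := hbar {q : Pt | ∃ s : ℝ, q = p + s • v}
      ⟨p, v, hvne, rfl⟩
      ⟨p, ⟨0, by simp⟩, by
        constructor <;> simp [hp, unitSquare] <;> constructor <;> linarith⟩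
    obtain ⟨s, rfl⟩ := hxl
    have hft : f1 (p + s • v) = t := by
      simp [hf1, PiLp.add_apply, PiLp.smul_apply, smul_eq_mul, hp, hv]
      ring
    rw [mem_iUnion] at hxΓ ⊢
    obtain ⟨i, hi⟩ := hxΓ
    exact ⟨i, hft ▸ hseg f1 hf1lin i _ hi⟩
  -- covering by second projection
  have hcov2 : Icc (-1:ℝ) 1 ⊆ ⋃ i, uIcc (f2 (a i)) (f2 (b i)) := by
    intro t ht
    obtain ⟨ht0, ht2⟩ := ht
    set p : Pt := WithLp.toLp 2 (![(1+t)/2, (1-t)/2] : Fin 2 → ℝ) with hp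
    set v : Pt := WithLp.toLp 2 (![1, 1] : Fin 2 → ℝ) with hv
    have hvne : v ≠ 0 := by
      intro h
      have := congrArg (fun w : Pt => w 0) h
      simp [hv] at this
    obtain ⟨x, hxl, hxΓ⟩ := hbar {q : Pt | ∃ s : ℝ, q = p + s • v}
      ⟨p, v, hvne, rfl⟩
      ⟨p, ⟨0, by simp⟩, by
        constructor <;> simp [hp, unitSquare] <;> constructor <;> linarith⟩
    obtain ⟨s, rfl⟩ := hxl
    have hft : f2 (p + s • v) = t := by
      simp [hf2, PiLp.add_apply, PiLp.smul_apply, smul_eq_mul, hp, hv]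
      ring
    rw [mem_iUnion] at hxΓ ⊢
    obtain ⟨i, hi⟩ := hxΓ
    exact ⟨i, hft ▸ hseg f2 hf2lin i _ hi⟩
  -- summability
  have habs1 : ∀ i, |f1 (b i) - f1 (a i)| ≤ 2 * ℓ i := by
    intro i
    have h0 := abs_coord_le_norm (d i) 0
    have h1 := abs_coord_le_norm (d i) 1
    have : f1 (b i) - f1 (a i) = (d i) 0 + (d i) 1 := by
      simp [hf1, hd0, hd1]; ring
    rw [this]
    calc |(d i) 0 + (d i) 1| ≤ |(d i) 0| + |(d i) 1| := abs_add_le _ _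
    _ ≤ 2 * ℓ i := by simp only [hℓ]; linarith
  have habs2 : ∀ i, |f2 (b i) - f2 (a i)| ≤ 2 * ℓ i := by
    intro i
    have h0 := abs_coord_le_norm (d i) 0
    have h1 := abs_coord_le_norm (d i) 1
    have : f2 (b i) - f2 (a i) = (d i) 0 - (d i) 1 := by
      simp [hf2, hd0, hd1]; ring
    rw [this]
    calc |(d i) 0 - (d i) 1| ≤ |(d i) 0| + |(d i) 1| := abs_sub _ _
    _ ≤ 2 * ℓ i := by simp only [hℓ]; linarith
  have hsum2 : Summable fun i => 2 * ℓ i := hsum.mul_left 2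
  have hs1 : Summable fun i => |f1 (b i) - f1 (a i)| :=
    Summable.of_nonneg_of_le (fun i => abs_nonneg _) habs1 hsum2
  have hs2 : Summable fun i => |f2 (b i) - f2 (a i)| :=
    Summable.of_nonneg_of_le (fun i => abs_nonneg _) habs2 hsum2
  -- the two projection inequalities
  have hproj1 : (2:ℝ) ≤ ∑' i, |f1 (b i) - f1 (a i)| := by
    have := length_le_tsum_of_cover 0 2 (fun i => f1 (a i)) (fun i => f1 (b i)) hcov1 hs1
    linarith
  have hproj2 : (2:ℝ) ≤ ∑' i, |f2 (b i) - f2 (a i)| := by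
    have := length_le_tsum_of_cover (-1) 1 (fun i => f2 (a i)) (fun i => f2 (b i)) hcov2 hs2
    linarith
  -- max of coordinates
  set m : ℕ → ℝ := fun i => max |(d i) 0| |(d i) 1| with hm
  have hm_nonneg : ∀ i, 0 ≤ m i := fun i => le_trans (abs_nonneg _) (le_max_left _ _)
  have hm_le : ∀ i, m i ≤ ℓ i := fun i =>
    max_le (abs_coord_le_norm (d i) 0) (abs_coord_le_norm (d i) 1)
  have hsm : Summable m := Summable.of_nonneg_of_le hm_nonneg hm_le hsum
  -- |f1| + |f2| ≤ 2m pointwise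
  have hkey : ∀ i, |f1 (b i) - f1 (a i)| + |f2 (b i) - f2 (a i)| ≤ 2 * m i := by
    intro i
    have e1 : f1 (b i) - f1 (a i) = (d i) 0 + (d i) 1 := by simp [hf1, hd0, hd1]; ring
    have e2 : f2 (b i) - f2 (a i) = (d i) 0 - (d i) 1 := by simp [hf2, hd0, hd1]; ring
    rw [e1, e2, hm]
    set x := (d i) 0; set y := (d i) 1
    rcases abs_cases (x+y) with ⟨h1,_⟩|⟨h1,_⟩ <;> rcases abs_cases (x-y) with ⟨h2,_⟩|⟨h2,_⟩ <;>
      rw [h1, h2] <;>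
      linarith [le_abs_self x, neg_abs_le x, le_abs_self y, neg_abs_le y,
        le_max_left |x| |y|, le_max_right |x| |y|]
  -- total bound: 2 ≤ ∑ m
  have htot : (2:ℝ) ≤ ∑' i, m i := by
    have h4 : (4:ℝ) ≤ ∑' i, (|f1 (b i) - f1 (a i)| + |f2 (b i) - f2 (a i)|) := by
      rw [Summable.tsum_add hs1 hs2]; linarith
    have h5 : ∑' i, (|f1 (b i) - f1 (a i)| + |f2 (b i) - f2 (a i)|) ≤ ∑' i, 2 * m i :=
      Summable.tsum_le_tsum hkey (hs1.add hs2) (hsm.mul_left 2)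
    rw [tsum_mul_left] at h5
    linarith
  -- partition index sets
  set S1 : Set ℕ := {j | NearHorizontal φ (a j) (b j)} with hS1
  set S2 : Set ℕ := {j | NearVertical φ (a j) (b j)} with hS2
  set S3 : Set ℕ := {j | ¬ NearHorizontal φ (a j) (b j) ∧ ¬ NearVertical φ (a j) (b j)} with hS3
  -- sin φ < √2/2, hence X and Y disjoint
  have hφπ : φ < Real.pi / 2 := lt_trans hφ1 (by linarith [Real.pi_pos])
  have hsinlt : Real.sin φ ^ 2 < 1 / 2 := by
    have h1 : Real.sin φ < Real.sin (Real.pi / 4) := by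
      apply Real.strictMonoOn_sin ⟨by linarith [Real.pi_pos], le_of_lt hφπ⟩
        ⟨by linarith [Real.pi_pos], by linarith [Real.pi_pos]⟩ hφ1
    rw [Real.sin_pi_div_four] at h1
    have hs0 : 0 ≤ Real.sin φ := Real.sin_nonneg_of_nonneg_of_le_pi (le_of_lt hφ0)
      (by linarith [Real.pi_pos])
    nlinarith [Real.sq_sqrt (by norm_num : (0:ℝ) ≤ 2), Real.sqrt_nonneg 2]
  have hdisj : ∀ i, ¬ (NearHorizontal φ (a i) (b i) ∧ NearVertical φ (a i) (b i)) := by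
    rintro i ⟨h1, h2⟩
    have hns := norm_sq_coords (d i)
    have hp := hℓpos i
    unfold NearHorizontal at h1
    unfold NearVertical at h2
    have e1 : |(b i - a i) 1| = |(d i) 1| := rfl
    have e2 : |(b i - a i) 0| = |(d i) 0| := rfl
    have e3 : ‖b i - a i‖ = ℓ i := rfl
    rw [e1, e3] at h1
    rw [e2, e3] at h2
    nlinarith [abs_nonneg ((d i) 0), abs_nonneg ((d i) 1), sq_abs ((d i) 0), sq_abs ((d i) 1),
      mul_pos hp hp]
  -- Z bound : m i ≤ cos φ * ℓ i on S3
  have hcos0 : 0 < Real.cos φ := Real.cos_pos_of_mem_Ioo ⟨by linarith [Real.pi_pos], hφπ⟩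
  have hZ : ∀ i, i ∈ S3 → m i ≤ Real.cos φ * ℓ i := by
    intro i hi
    obtain ⟨h1, h2⟩ := hi
    unfold NearHorizontal at h1
    unfold NearVertical at h2
    push_neg at h1 h2
    have e1 : |(b i - a i) 1| = |(d i) 1| := rfl
    have e2 : |(b i - a i) 0| = |(d i) 0| := rfl
    have e3 : ‖b i - a i‖ = ℓ i := rfl
    rw [e1, e3] at h1
    rw [e2, e3] at h2
    have hp := hℓpos i
    have hℓsq : ℓ i ^ 2 = (d i) 0 ^ 2 + (d i) 1 ^ 2 := norm_sq_coords (d i)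
    have hcs : Real.sin φ ^ 2 + Real.cos φ ^ 2 = 1 := Real.sin_sq_add_cos_sq φ
    have hs0 : 0 ≤ Real.sin φ := Real.sin_nonneg_of_nonneg_of_le_pi (le_of_lt hφ0)
      (by linarith [Real.pi_pos])
    have hsq1 : (Real.sin φ * ℓ i)^2 < (d i) 1 ^ 2 := by
      nlinarith [sq_abs ((d i) 1), abs_nonneg ((d i) 1), mul_nonneg hs0 hp.le]
    have hsq0 : (Real.sin φ * ℓ i)^2 < (d i) 0 ^ 2 := by
      nlinarith [sq_abs ((d i) 0), abs_nonneg ((d i) 0), mul_nonneg hs0 hp.le]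
    have hb0 : |(d i) 0| ≤ Real.cos φ * ℓ i := by
      nlinarith [abs_nonneg ((d i) 0), sq_abs ((d i) 0), mul_pos hcos0 hp]
    have hb1 : |(d i) 1| ≤ Real.cos φ * ℓ i := by
      nlinarith [abs_nonneg ((d i) 1), sq_abs ((d i) 1), mul_pos hcos0 hp]
    exact max_le hb0 hb1
  -- indicator decomposition
  have hpart : ∀ i, S1.indicator m i + S2.indicator m i + S3.indicator m i = m i := by
    intro i
    by_cases h1 : NearHorizontal φ (a i) (b i)
    · have : i ∈ S1 := h1
      have h2 : i ∉ S2 := fun h => hdisj i ⟨h1, h⟩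
      have h3 : i ∉ S3 := fun h => h.1 h1
      rw [Set.indicator_of_mem this, Set.indicator_of_notMem h2, Set.indicator_of_notMem h3]
      ring
    · by_cases h2 : NearVertical φ (a i) (b i)
      · have h1' : i ∉ S1 := h1
        have h3 : i ∉ S3 := fun h => h.2 h2
        rw [Set.indicator_of_notMem h1', Set.indicator_of_mem (show i ∈ S2 from h2),
          Set.indicator_of_notMem h3]
        ring
      · have h1' : i ∉ S1 := h1
        have h2' : i ∉ S2 := h2
        rw [Set.indicator_of_notMem h1', Set.indicator_of_notMem h2',
          Set.indicator_of_mem (show i ∈ S3 from ⟨h1, h2⟩)]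
        ring
  have hind1 : Summable (S1.indicator m) := hsm.indicator S1
  have hind2 : Summable (S2.indicator m) := hsm.indicator S2
  have hind3 : Summable (S3.indicator m) := hsm.indicator S3
  have hsplit : ∑' i, m i = (∑' i : S1, m i) + (∑' i : S2, m i) + (∑' i : S3, m i) := by
    rw [tsum_subtype S1 m, tsum_subtype S2 m, tsum_subtype S3 m,
      ← Summable.tsum_add hind1 hind2, ← Summable.tsum_add (hind1.add hind2) hind3]
    exact (tsum_congr hpart).symm
  -- bound the three subsums
  have hsumS1 : Summable fun i : S1 => ℓ i := hsum.subtype S1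
  have hsumS2 : Summable fun i : S2 => ℓ i := hsum.subtype S2
  have hsumS3 : Summable fun i : S3 => ℓ i := hsum.subtype S3
  have hmS1 : Summable fun i : S1 => m i := hsm.subtype S1
  have hmS2 : Summable fun i : S2 => m i := hsm.subtype S2
  have hmS3 : Summable fun i : S3 => m i := hsm.subtype S3
  have hb1 : (∑' i : S1, m i) ≤ ∑' i : S1, ℓ i :=
    Summable.tsum_le_tsum (fun i => hm_le i) hmS1 hsumS1
  have hb2 : (∑' i : S2, m i) ≤ ∑' i : S2, ℓ i :=
    Summable.tsum_le_tsum (fun i => hm_le i) hmS2 hsumS2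
  have hb3 : (∑' i : S3, m i) ≤ Real.cos φ * ∑' i : S3, ℓ i := by
    rw [← tsum_mul_left]
    exact Summable.tsum_le_tsum (fun i => hZ i i.2) hmS3 (hsumS3.mul_left _)
  -- final arithmetic
  have hfinal : (2:ℝ) ≤ (∑' i : S1, ℓ i) + (∑' i : S2, ℓ i) + Real.cos φ * ∑' i : S3, ℓ i := by
    rw [hsplit] at htot
    linarith
  have hℓeq1 : (∑' i : {j : ℕ // NearHorizontal φ (a j) (b j)}, ‖b i.1 - a i.1‖)
      = ∑' i : S1, ℓ i := rfl
  have hℓeq2 : (∑' i : {j : ℕ // NearVertical φ (a j) (b j)}, ‖b i.1 - a i.1‖)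
      = ∑' i : S2, ℓ i := rfl
  have hℓeq3 : (∑' i : {j : ℕ // ¬ NearHorizontal φ (a j) (b j) ∧ ¬ NearVertical φ (a j) (b j)},
      ‖b i.1 - a i.1‖) = ∑' i : S3, ℓ i := rfl
  rw [hℓeq1, hℓeq2, hℓeq3]
  have h2 : (0:ℝ) ≤ Real.sqrt 2 := Real.sqrt_nonneg 2
  nlinarith [mul_le_mul_of_nonneg_right hfinal h2]
end
end
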